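/- Let r, d ≥ 1, let a_1, ..., a_r, b ≥ 2 with gcd(a_1⋯a_r, b) = 1 and d ≥ a_1 + ⋯ + a_r + b + 1. For i ∈ {1,...,r} let σ_i be an a_i-cycle and let τ be a b-cycle in the symmetric group S_d, with pairwise disjoint supports. Then there is no indecomposable crossed set structure on X = {1, ..., d} with φ_1 = σ_1 ⋯ σ_r τ. -/

import Mathlib

/-- A rack structure on a set `X`: a binary operation `act` such that each left
translation is bijective and `act` is self-distributive. -/
structure RackStr (X : Type*) where
  act : X → X → X
  bij : ∀ x, Function.Bijective (act x)
  self_distrib : ∀ x y z, act x (act y z) = act (act x y) (act x z)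

namespace RackStr

variable {X : Type*}

/-- A quandle is a rack with `x ▷ x = x`. -/
def IsQuandle (R : RackStr X) : Prop := ∀ x, R.act x x = x

/-- A crossed set is a quandle in which `x ▷ y = y ↔ y ▷ x = x`. -/
def IsCrossed (R : RackStr X) : Prop :=
  R.IsQuandle ∧ ∀ x y, R.act x y = y ↔ R.act y x = x

/-- The left translation `φ_x` as a permutation. -/
noncomputable def perm (R : RackStr X) (x : X) : Equiv.Perm X :=
  Equiv.ofBijective (R.act x) (R.bij x)

/-- A rack is indecomposable if its inner group (generated by the `φ_x`)
acts transitively. -/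
def Indecomposable (R : RackStr X) : Prop :=
  ∀ x y : X, ∃ π ∈ Subgroup.closure (Set.range R.perm), π x = y

end RackStr

namespace RackStr

variable {X : Type*} (R : RackStr X)

lemma perm_apply (x y : X) : R.perm x y = R.act x y := rfl

lemma perm_conj (x z : X) :
    R.perm (R.act x z) = R.perm x * R.perm z * (R.perm x)⁻¹ := by
  ext w
  obtain ⟨v, rfl⟩ := (R.bij x).2 w
  have h1 : (R.perm x)⁻¹ (R.act x v) = v := by
    have h0 : R.perm x v = R.act x v := rfl
    rw [← h0]; exact Equiv.symm_apply_apply _ _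
  simp only [Equiv.Perm.mul_apply, h1]
  show R.act (R.act x z) (R.act x v) = R.perm x (R.act z v)
  rw [perm_apply]
  exact (R.self_distrib x z v).symm

lemma perm_equivariant {π : Equiv.Perm X}
    (hπ : π ∈ Subgroup.closure (Set.range R.perm)) (z : X) :
    R.perm (π z) = π * R.perm z * π⁻¹ := by
  let H : Subgroup (Equiv.Perm X) :=
    { carrier := {g | ∀ z, R.perm (g z) = g * R.perm z * g⁻¹}
      one_mem' := by intro z; simp
      mul_mem' := by
        intro g₁ g₂ h₁ h₂ z
        have e2 := h₂ z
        have e1 := h₁ (g₂ z)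
        show R.perm (g₁ (g₂ z)) = _
        rw [e1, e2]
        group
      inv_mem' := by
        intro g hg z
        have e := hg (g⁻¹ z)
        rw [show g (g⁻¹ z) = z from Equiv.apply_symm_apply g z] at e
        rw [e]
        group }
  have hle : Subgroup.closure (Set.range R.perm) ≤ H := by
    rw [Subgroup.closure_le]
    rintro _ ⟨x, rfl⟩ z
    exact R.perm_conj x z
  exact hle hπ z

end RackStr

section ListHelpers

variable {α : Type*}

lemma aux_disjoint_prod (p : Equiv.Perm α) :
    ∀ (l : List (Equiv.Perm α)), (∀ g ∈ l, p.Disjoint g) → p.Disjoint l.prod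
  | [], _ => by simp [Equiv.Perm.disjoint_one_right p]
  | q :: rest, h => by
      rw [List.prod_cons]
      exact (h q (by simp)).mul_right
        (aux_disjoint_prod p rest fun g hg => h g (by simp [hg]))

lemma aux_prod_disjoint (τ : Equiv.Perm α) :
    ∀ (l : List (Equiv.Perm α)), (∀ g ∈ l, g.Disjoint τ) → l.prod.Disjoint τ
  | [], _ => by simp [Equiv.Perm.disjoint_one_left τ]
  | q :: rest, h => by
      rw [List.prod_cons]
      exact (h q (by simp)).mul_left
        (aux_prod_disjoint τ rest fun g hg => h g (by simp [hg]))

lemma aux_prod_fix (u : α) :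
    ∀ (l : List (Equiv.Perm α)), (∀ g ∈ l, g u = u) → l.prod u = u
  | [], _ => by simp
  | q :: rest, h => by
      rw [List.prod_cons, Equiv.Perm.mul_apply,
        aux_prod_fix u rest (fun g hg => h g (by simp [hg])), h q (by simp)]

lemma aux_prod_apply_of_mem :
    ∀ (l : List (Equiv.Perm α)), l.Pairwise Equiv.Perm.Disjoint →
      ∀ g ∈ l, ∀ u, g u ≠ u → l.prod u = g u
  | [], _, g, hg, _, _ => absurd hg (List.not_mem_nil (a := g))
  | q :: rest, hl, g, hg, u, hu => by
      rw [List.pairwise_cons] at hl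
      rw [List.prod_cons, Equiv.Perm.mul_apply]
      rcases List.mem_cons.mp hg with rfl | hgr
      · have hfix : rest.prod u = u :=
          aux_prod_fix u rest (fun h hh => ((hl.1 h hh) u).resolve_left hu)
        rw [hfix]
      · have hres : rest.prod u = g u := aux_prod_apply_of_mem rest hl.2 g hgr u hu
        rw [hres]
        rcases (hl.1 g hgr) (g u) with h1 | h2
        · exact h1
        · exact absurd (g.injective h2) hu

lemma aux_prod_pow_one (P : ℕ) :
    ∀ (l : List (Equiv.Perm α)), l.Pairwise Equiv.Perm.Disjoint →
      (∀ g ∈ l, g ^ P = 1) → l.prod ^ P = 1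
  | [], _, _ => by simp
  | q :: rest, hl, h => by
      rw [List.pairwise_cons] at hl
      rw [List.prod_cons]
      have hc : Commute q rest.prod := (aux_disjoint_prod q rest hl.1).commute
      rw [hc.mul_pow, h q (by simp),
        aux_prod_pow_one P rest hl.2 (fun g hg => h g (by simp [hg])), one_mul]

end ListHelpers

/-- no indecomposable crossed set structure on `{1,…,d}` has
`φ_1 = σ_1 ⋯ σ_r τ`, where the `σ_i` are `a_i`-cycles and `τ` is a `b`-cycle
with pairwise disjoint supports, `gcd(a_1⋯a_r, b) = 1`, all `a_i, b ≥ 2`, and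
`d ≥ a_1 + ⋯ + a_r + b + 1`. -/
theorem incommensurable_profiles (r d : ℕ) (hr : 1 ≤ r) (hd : 0 < d)
    (a : Fin r → ℕ) (b : ℕ) (ha : ∀ i, 2 ≤ a i) (hb : 2 ≤ b)
    (hgcd : Nat.gcd (∏ i, a i) b = 1)
    (hdge : (∑ i, a i) + b + 1 ≤ d)
    (σ : Fin r → Equiv.Perm (Fin d)) (τ : Equiv.Perm (Fin d))
    (hσcyc : ∀ i, (σ i).IsCycle) (hσcard : ∀ i, (σ i).support.card = a i)
    (hτcyc : τ.IsCycle) (hτcard : τ.support.card = b)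
    (hdisj : ∀ i j, i ≠ j → Disjoint (σ i).support (σ j).support)
    (hdisjτ : ∀ i, Disjoint (σ i).support τ.support) :
    ¬ ∃ R : RackStr (Fin d), R.IsCrossed ∧ R.Indecomposable ∧
        R.perm ⟨0, hd⟩ = (List.ofFn σ).prod * τ := by
  rintro ⟨R, ⟨hQ, hCr⟩, hInd, hphi⟩
  set x1 : Fin d := ⟨0, hd⟩ with hx1def
  set S : Equiv.Perm (Fin d) := (List.ofFn σ).prod with hSdef
  set φ : Fin d → Equiv.Perm (Fin d) := R.perm with hφdef
  -- perm-level disjointness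
  have hmem_ofFn : ∀ g ∈ List.ofFn σ, ∃ i, σ i = g := by
    intro g hg
    obtain ⟨i, hi⟩ := Set.mem_range.mp ((List.mem_ofFn' σ g).mp hg)
    exact ⟨i, hi⟩
  have hpair : (List.ofFn σ).Pairwise Equiv.Perm.Disjoint := by
    rw [List.pairwise_ofFn]
    intro i j hij
    exact Equiv.Perm.disjoint_iff_disjoint_support.mpr (hdisj i j (Fin.ne_of_lt hij))
  have hSτdisj : S.Disjoint τ := by
    rw [hSdef]
    refine aux_prod_disjoint τ _ ?_
    intro g hg
    obtain ⟨i, rfl⟩ := hmem_ofFn g hg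
    exact Equiv.Perm.disjoint_iff_disjoint_support.mpr (hdisjτ i)
  have hSτcomm : Commute S τ := hSτdisj.commute
  -- basic applications
  have hφ1 : φ x1 = S * τ := hphi
  have hCr' : ∀ x y : Fin d, φ x y = y ↔ φ y x = x := fun x y => hCr x y
  have hQ' : ∀ x : Fin d, φ x x = x := fun x => hQ x
  have hτmove : ∀ w : Fin d, τ w ≠ w → τ (τ w) ≠ τ w := by
    intro w hw h
    exact hw (τ.injective h)
  have hφ1T : ∀ t : Fin d, τ t ≠ t → φ x1 t = τ t := by
    intro t ht
    rw [hφ1]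
    show S (τ t) = τ t
    rcases hSτdisj (τ t) with h | h
    · exact h
    · exact absurd (τ.injective h) ht
  have hφ1S : ∀ x : Fin d, S x ≠ x → φ x1 x = S x := by
    intro x hx
    have hτx : τ x = x := (hSτdisj x).resolve_left hx
    rw [hφ1]
    show S (τ x) = S x
    rw [hτx]
  have hφ1fix : ∀ z : Fin d, τ z = z → S z = z → φ x1 z = z := by
    intro z h1 h2
    rw [hφ1]
    show S (τ z) = z
    rw [h1, h2]
  -- x1 is fixed by τ and S
  have hτx1 : τ x1 = x1 := by
    by_contra h
    have := hφ1T x1 h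
    rw [hQ' x1] at this
    exact h this.symm  -- x1 = τ x1
  have hSx1 : S x1 = x1 := by
    have := hQ' x1
    rw [hφ1] at this
    show S x1 = x1
    have h2 : S (τ x1) = x1 := this
    rwa [hτx1] at h2
  -- order facts
  have hτord : orderOf τ = b := by rw [hτcyc.orderOf, hτcard]
  have hτpowb : τ ^ b = 1 := by rw [← hτord]; exact pow_orderOf_eq_one τ
  obtain ⟨u, -, hu⟩ := Nat.exists_mul_mod_eq_one_of_coprime hgcd (lt_of_lt_of_le one_lt_two hb)
  set P : ℕ := ∏ i, a i with hPdef
  set B : ℕ := P * u with hBdef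
  have hSP : S ^ P = 1 := by
    rw [hSdef]
    refine aux_prod_pow_one P _ hpair ?_
    intro g hg
    obtain ⟨i, rfl⟩ := hmem_ofFn g hg
    have hord : orderOf (σ i) = a i := by rw [(hσcyc i).orderOf, hσcard]
    have : orderOf (σ i) ∣ P := by rw [hord, hPdef]; exact Finset.dvd_prod_of_mem a (Finset.mem_univ i)
    exact orderOf_dvd_iff_pow_eq_one.mp this
  have hτB : τ ^ B = τ := by
    have h1 : τ ^ (B % orderOf τ) = τ ^ B := pow_mod_orderOf τ B
    rw [← h1, hτord, hBdef, hu, pow_one]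
  have hφB : (φ x1) ^ B = τ := by
    rw [hφ1, hSτcomm.mul_pow, hBdef, pow_mul, hSP, one_pow, one_mul, ← hBdef, hτB]
  -- group membership
  set G : Subgroup (Equiv.Perm (Fin d)) := Subgroup.closure (Set.range R.perm) with hGdef
  have hφmem : ∀ z : Fin d, φ z ∈ G := fun z => Subgroup.subset_closure ⟨z, rfl⟩
  have hτG : τ ∈ G := by rw [← hφB]; exact pow_mem (hφmem x1) B
  have hτkG : ∀ k : ℤ, τ ^ k ∈ G := fun k => zpow_mem hτG k
  have hSG : S ∈ G := by
    have hSeq : S = φ x1 * τ⁻¹ := by rw [hφ1, mul_assoc, mul_inv_cancel, mul_one]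
    rw [hSeq]
    exact mul_mem (hφmem x1) (inv_mem hτG)
  have Heq : ∀ {π : Equiv.Perm (Fin d)}, π ∈ G → ∀ z, φ (π z) = π * φ z * π⁻¹ :=
    fun {π} hπ z => R.perm_equivariant hπ z
  -- L4
  have hL4S : ∀ t : Fin d, τ t ≠ t → Commute S (φ t) := by
    intro t ht
    have h1 : φ (φ x1 t) = φ x1 * φ t * (φ x1)⁻¹ := Heq (hφmem x1) t
    have h2 : φ (τ t) = τ * φ t * τ⁻¹ := Heq hτG t
    rw [hφ1T t ht] at h1
    have key : φ x1 * φ t * (φ x1)⁻¹ = τ * φ t * τ⁻¹ := h1.symm.trans h2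
    have hS_eq : S = τ⁻¹ * φ x1 := by
      rw [hφ1, hSτcomm.eq, ← mul_assoc, inv_mul_cancel, one_mul]
    have hconj : S * φ t * S⁻¹ = φ t := by
      rw [hS_eq]
      calc τ⁻¹ * φ x1 * φ t * (τ⁻¹ * φ x1)⁻¹
          = τ⁻¹ * (φ x1 * φ t * (φ x1)⁻¹) * τ := by group
        _ = τ⁻¹ * (τ * φ t * τ⁻¹) * τ := by rw [key]
        _ = φ t := by group
    exact mul_inv_eq_iff_eq_mul.mp hconj
  have hL4T : ∀ x : Fin d, S x ≠ x → Commute τ (φ x) := by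
    intro x hx
    have h1 : φ (φ x1 x) = φ x1 * φ x * (φ x1)⁻¹ := Heq (hφmem x1) x
    have h2 : φ (S x) = S * φ x * S⁻¹ := Heq hSG x
    rw [hφ1S x hx] at h1
    have key : φ x1 * φ x * (φ x1)⁻¹ = S * φ x * S⁻¹ := h1.symm.trans h2
    have hτ_eq : τ = S⁻¹ * φ x1 := by
      rw [hφ1, ← mul_assoc, inv_mul_cancel, one_mul]
    have hconj : τ * φ x * τ⁻¹ = φ x := by
      rw [hτ_eq]
      calc S⁻¹ * φ x1 * φ x * (S⁻¹ * φ x1)⁻¹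
          = S⁻¹ * (φ x1 * φ x * (φ x1)⁻¹) * S := by group
        _ = S⁻¹ * (S * φ x * S⁻¹) * S := by rw [key]
        _ = φ x := by group
    exact mul_inv_eq_iff_eq_mul.mp hconj
  -- L5
  have hL5 : ∀ y : Fin d, φ x1 y = y → Commute (φ y) (φ x1) := by
    intro y hy
    have h1 : φ y x1 = x1 := (hCr' x1 y).mp hy
    have h2 : φ (φ y x1) = φ y * φ x1 * (φ y)⁻¹ := Heq (hφmem y) x1
    rw [h1] at h2
    have : φ y * φ x1 * (φ y)⁻¹ = φ x1 := h2.symm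
    exact mul_inv_eq_iff_eq_mul.mp this
  -- commuting with τ preserves its support
  have hpres : ∀ (c : Equiv.Perm (Fin d)), Commute c τ →
      ∀ w, (τ (c w) ≠ c w ↔ τ w ≠ w) := by
    intro c hc w
    have h : τ (c w) = c (τ w) := by
      calc τ (c w) = (τ * c) w := rfl
        _ = (c * τ) w := by rw [hc.eq]
        _ = c (τ w) := rfl
    have heq : τ (c w) = c w ↔ τ w = w := by
      rw [h]
      exact ⟨fun hh => c.injective hh, fun hh => by rw [hh]⟩
    exact not_congr heq
  -- centralizer of the cycle τ
  obtain ⟨t₁, ht₁, hsc⟩ := hτcyc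
  have hcent : ∀ (c : Equiv.Perm (Fin d)), Commute c τ →
      ∃ k : ℤ, ∀ w, τ w ≠ w → c w = (τ ^ k) w := by
    intro c hc
    have hct₁ : τ (c t₁) ≠ c t₁ := (hpres c hc t₁).mpr ht₁
    obtain ⟨k, hk⟩ := hsc hct₁
    refine ⟨k, fun w hw => ?_⟩
    obtain ⟨j, hj⟩ := hsc hw
    have hcom : c * τ ^ j = τ ^ j * c := (hc.zpow_right j).eq
    calc c w = c ((τ ^ j) t₁) := by rw [hj]
      _ = (c * τ ^ j) t₁ := rfl
      _ = (τ ^ j * c) t₁ := by rw [hcom]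
      _ = (τ ^ j) (c t₁) := rfl
      _ = (τ ^ j) ((τ ^ k) t₁) := by rw [hk]
      _ = (τ ^ (j + k)) t₁ := by rw [← Equiv.Perm.mul_apply, ← zpow_add]
      _ = (τ ^ (k + j)) t₁ := by rw [add_comm]
      _ = (τ ^ k) ((τ ^ j) t₁) := by rw [zpow_add, Equiv.Perm.mul_apply]
      _ = (τ ^ k) w := by rw [hj]
  have hzsupp : ∀ (i : ℤ) (w : Fin d), τ w ≠ w → τ ((τ ^ i) w) ≠ (τ ^ i) w := by
    intro i w hw h
    have hc : τ * τ ^ i = τ ^ i * τ := (Commute.refl τ).zpow_right i |>.eq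
    have : (τ ^ i) (τ w) = (τ ^ i) w := by
      calc (τ ^ i) (τ w) = (τ ^ i * τ) w := rfl
        _ = (τ * τ ^ i) w := by rw [hc]
        _ = τ ((τ ^ i) w) := rfl
        _ = (τ ^ i) w := h
    exact hw ((τ ^ i).injective this)
  have hpsupp : ∀ (n : ℕ) (w : Fin d), τ w ≠ w → τ ((τ ^ n) w) ≠ (τ ^ n) w := by
    intro n w hw
    have := hzsupp (n : ℤ) w hw
    rwa [zpow_natCast] at this
  have hτzx1 : ∀ i : ℤ, (τ ^ i) x1 = x1 :=
    fun i => Equiv.Perm.zpow_apply_eq_self_of_apply_eq_self hτx1 i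
  -- a point moved by S
  obtain ⟨u0, hu0, _⟩ := hσcyc ⟨0, hr⟩
  have hu0S : S u0 ≠ u0 := by
    rw [hSdef, aux_prod_apply_of_mem (List.ofFn σ) hpair (σ ⟨0, hr⟩)
      (by rw [List.mem_ofFn]; exact ⟨⟨0, hr⟩, rfl⟩) u0 hu0]
    exact hu0
  -- MAIN CASE SPLIT
  by_cases hHtt : ∃ t₀, τ t₀ ≠ t₀ ∧ τ (φ t₀ x1) ≠ φ t₀ x1
  · -- Pincer case: some t₀ in supp τ with φ_{t₀}(1) ∈ supp τ
    obtain ⟨t₀, ht₀, hw₀⟩ := hHtt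
    have hcomm : Commute (φ u0) τ := (hL4T u0 hu0S).symm
    obtain ⟨k, hk⟩ := hcent (φ u0) hcomm
    set s : Equiv.Perm (Fin d) := φ u0 * (τ ^ k)⁻¹ with hsdef
    have hsfix : ∀ w, τ w ≠ w → s w = w := by
      intro w hw
      have h1 : (τ ^ k)⁻¹ w = (τ ^ (-k)) w := by rw [zpow_neg]
      have h2 : τ ((τ ^ (-k)) w) ≠ (τ ^ (-k)) w := hzsupp (-k) w hw
      show φ u0 ((τ ^ k)⁻¹ w) = w
      rw [h1, hk _ h2, ← Equiv.Perm.mul_apply, ← zpow_add, add_neg_cancel, zpow_zero,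
        Equiv.Perm.one_apply]
    have hscomm : Commute s (φ t₀) := by
      have h1 : φ (φ u0 t₀) = φ u0 * φ t₀ * (φ u0)⁻¹ := Heq (hφmem u0) t₀
      have h3 : φ ((τ ^ k) t₀) = τ ^ k * φ t₀ * (τ ^ k)⁻¹ := Heq (hτkG k) t₀
      rw [hk t₀ ht₀] at h1
      have key : φ u0 * φ t₀ * (φ u0)⁻¹ = τ ^ k * φ t₀ * (τ ^ k)⁻¹ := h1.symm.trans h3
      have hs2 : s = (τ ^ k)⁻¹ * φ u0 := ((hcomm.zpow_right k).inv_right).eq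
      have hconj : s * φ t₀ * s⁻¹ = φ t₀ := by
        rw [hs2]
        calc (τ ^ k)⁻¹ * φ u0 * φ t₀ * ((τ ^ k)⁻¹ * φ u0)⁻¹
            = (τ ^ k)⁻¹ * (φ u0 * φ t₀ * (φ u0)⁻¹) * τ ^ k := by group
          _ = (τ ^ k)⁻¹ * (τ ^ k * φ t₀ * (τ ^ k)⁻¹) * τ ^ k := by rw [key]
          _ = φ t₀ := by group
      exact mul_inv_eq_iff_eq_mul.mp hconj
    have h1 : s (φ t₀ x1) = φ t₀ x1 := hsfix _ hw₀
    have h2 : s x1 = φ u0 x1 := by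
      show φ u0 ((τ ^ k)⁻¹ x1) = φ u0 x1
      congr 1
      rw [← zpow_neg]
      exact hτzx1 (-k)
    have h4 : s (φ t₀ x1) = φ t₀ (s x1) := by
      calc s (φ t₀ x1) = (s * φ t₀) x1 := rfl
        _ = (φ t₀ * s) x1 := by rw [hscomm.eq]
        _ = φ t₀ (s x1) := rfl
    rw [h1, h2] at h4
    have h5 : x1 = φ u0 x1 := (φ t₀).injective h4
    have h6 : φ x1 u0 = u0 := (hCr' u0 x1).mp h5.symm
    rw [hφ1S u0 hu0S] at h6
    exact hu0S h6
  · -- Invariance case: for all t in supp τ, φ_t(1) is a fixed point of φ_1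
    push_neg at hHtt
    have hTt : ∀ t, τ t ≠ t → ∀ w, (τ (φ t w) ≠ φ t w ↔ τ w ≠ w) := by
      intro t ht
      have hyτ : τ (φ t x1) = φ t x1 := hHtt t ht
      have hyS : S (φ t x1) = φ t x1 := by
        have hc := hL4S t ht
        calc S (φ t x1) = (S * φ t) x1 := rfl
          _ = (φ t * S) x1 := by rw [hc.eq]
          _ = φ t (S x1) := rfl
          _ = φ t x1 := by rw [hSx1]
      have hyfix : φ x1 (φ t x1) = φ t x1 := hφ1fix _ hyτ hyS
      have hyL5 : Commute (φ (φ t x1)) (φ x1) := hL5 _ hyfix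
      have hyτc : Commute (φ (φ t x1)) τ := by rw [← hφB]; exact hyL5.pow_right B
      by_cases hfix : ∀ w, τ w ≠ w → φ (φ t x1) w = w
      · -- subcase: φ_y fixes supp τ pointwise: contradiction
        exfalso
        have step : ∀ t', τ t' ≠ t' → φ t' = φ t → φ t' (τ t') = t' ∧ φ (τ t') = φ t := by
          intro t' ht' heq
          have hyy : φ t' x1 = φ t x1 := by rw [heq]
          have e1 : φ (φ t' x1) = φ t' * φ x1 * (φ t')⁻¹ := Heq (hφmem t') x1
          rw [hyy] at e1
          have e3 : (φ t')⁻¹ t' = t' :=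
            (φ t').injective (by rw [show φ t' ((φ t')⁻¹ t') = t' from Equiv.apply_symm_apply _ _, hQ' t'])
          have e5 : φ t' (τ t') = t' := by
            have e2 : φ (φ t x1) t' = t' := hfix t' ht'
            rw [e1] at e2
            have e4 : φ t' (φ x1 ((φ t')⁻¹ t')) = t' := e2
            rw [e3, hφ1T t' ht'] at e4
            exact e4
          have e6 : φ (φ t' (τ t')) = φ t' * φ (τ t') * (φ t')⁻¹ := Heq (hφmem t') (τ t')
          rw [e5] at e6
          have e7 : φ t' * φ (τ t') = φ t' * φ t' := mul_inv_eq_iff_eq_mul.mp e6.symm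
          exact ⟨e5, (mul_left_cancel e7).trans heq⟩
        have hiter : ∀ j : ℕ, φ ((τ ^ j) t) = φ t := by
          intro j
          induction j with
          | zero => simp
          | succ n ih =>
            have htn : τ ((τ ^ n) t) ≠ (τ ^ n) t := hpsupp n t ht
            have hstep := (step ((τ ^ n) t) htn ih).2
            have hrw : τ ((τ ^ n) t) = (τ ^ (n + 1)) t := by
              rw [pow_succ']
              rfl
            rwa [hrw] at hstep
        have hb1 : φ ((τ ^ (b - 1)) t) = φ t := hiter (b - 1)
        have htb : τ ((τ ^ (b - 1)) t) ≠ (τ ^ (b - 1)) t := hpsupp (b - 1) t ht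
        have hfin := (step ((τ ^ (b - 1)) t) htb hb1).1
        have hτbt : τ ((τ ^ (b - 1)) t) = t := by
          have hbb : τ * τ ^ (b - 1) = τ ^ b := by
            rw [← pow_succ']
            congr 1
            omega
          calc τ ((τ ^ (b - 1)) t) = (τ * τ ^ (b - 1)) t := rfl
            _ = (τ ^ b) t := by rw [hbb]
            _ = t := by rw [hτpowb]; rfl
        rw [hτbt, hb1, hQ' t] at hfin
        have hcontra : τ t = t := by
          conv_lhs => rw [hfin]
          exact hτbt
        exact ht hcontra
      · -- subcase: φ_y moves some point of supp τ: then φ_t preserves supp τ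
        push_neg at hfix
        obtain ⟨w₁, hw₁, hyw₁⟩ := hfix
        obtain ⟨m, hm⟩ := hcent (φ (φ t x1)) hyτc
        have ey : φ (φ t x1) = φ t * φ x1 * (φ t)⁻¹ := Heq (hφmem t) x1
        have hcB : (φ (φ t x1)) ^ B = φ t * τ * (φ t)⁻¹ := by
          rw [ey, conj_pow, hφB]
        have hyiter : ∀ n : ℕ, ∀ w, τ w ≠ w → ((φ (φ t x1)) ^ n) w = ((τ ^ m) ^ n) w := by
          intro n
          induction n with
          | zero => intro w _; simp
          | succ nn ih =>
            intro w hw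
            have h1 : ((φ (φ t x1)) ^ (nn + 1)) w = φ (φ t x1) (((φ (φ t x1)) ^ nn) w) := by
              rw [pow_succ']
              rfl
            rw [h1, ih w hw]
            have hcast : ((τ ^ m) ^ nn) w = (τ ^ (m * nn)) w := by
              rw [← zpow_natCast (τ ^ m) nn, ← zpow_mul]
            have hmoved : τ (((τ ^ m) ^ nn) w) ≠ ((τ ^ m) ^ nn) w := by
              rw [hcast]
              exact hzsupp _ w hw
            rw [hm _ hmoved, pow_succ']
            rfl
        have hpowm : (τ ^ m) ^ B = τ ^ m := by
          rw [← zpow_natCast (τ ^ m) B, ← zpow_mul, mul_comm m (B : ℤ), zpow_mul,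
            zpow_natCast, hτB]
        have hcw₁ : (φ t * τ * (φ t)⁻¹) w₁ = (τ ^ m) w₁ := by
          rw [← hcB, hyiter B w₁ hw₁, hpowm]
        have hcmove : (φ t * τ * (φ t)⁻¹) w₁ ≠ w₁ := by
          rw [hcw₁, ← hm w₁ hw₁]
          exact hyw₁
        have hcτ : Commute (φ t * τ * (φ t)⁻¹) τ := by
          rw [← hcB]
          exact hyτc.pow_left B
        have hsub : τ.support ⊆ (φ t * τ * (φ t)⁻¹).support := by
          intro w' hw'
          rw [Equiv.Perm.mem_support] at hw' ⊢
          obtain ⟨j, hj⟩ := (hsc hw₁).symm.trans (hsc hw')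
          intro hcw'
          rw [← hj] at hcw'
          have hcj : (φ t * τ * (φ t)⁻¹) ((τ ^ j) w₁) = (τ ^ j) ((φ t * τ * (φ t)⁻¹) w₁) := by
            calc (φ t * τ * (φ t)⁻¹) ((τ ^ j) w₁) = ((φ t * τ * (φ t)⁻¹) * τ ^ j) w₁ := rfl
              _ = (τ ^ j * (φ t * τ * (φ t)⁻¹)) w₁ := by rw [(hcτ.zpow_right j).eq]
              _ = (τ ^ j) ((φ t * τ * (φ t)⁻¹) w₁) := rfl
          rw [hcj] at hcw'
          exact hcmove ((τ ^ j).injective hcw')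
        have hcsupp : (φ t * τ * (φ t)⁻¹).support = τ.support.map (φ t).toEmbedding :=
          Equiv.Perm.support_conj
        have hTeq : τ.support = (φ t * τ * (φ t)⁻¹).support :=
          Finset.eq_of_subset_of_card_le hsub (by rw [hcsupp, Finset.card_map])
        intro w
        constructor
        · intro h1
          have hmem : φ t w ∈ τ.support := Equiv.Perm.mem_support.mpr h1
          rw [hTeq, hcsupp] at hmem
          have hmem2 : (φ t).toEmbedding w ∈ τ.support.map (φ t).toEmbedding := hmem
          exact Equiv.Perm.mem_support.mp ((Finset.mem_map' _).mp hmem2)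
        · intro h1
          have hw : w ∈ τ.support := Equiv.Perm.mem_support.mpr h1
          have hmem : (φ t).toEmbedding w ∈ τ.support.map (φ t).toEmbedding :=
            Finset.mem_map_of_mem _ hw
          rw [← hcsupp, ← hTeq] at hmem
          exact Equiv.Perm.mem_support.mp hmem
    -- every translation preserves supp τ
    have hgen : ∀ z : Fin d, ∀ w, τ (φ z w) ≠ φ z w ↔ τ w ≠ w := by
      intro z
      by_cases hzτ : τ z ≠ z
      · exact hTt z hzτ
      · by_cases hzS : S z ≠ z
        · exact hpres (φ z) (hL4T z hzS).symm
        · push_neg at hzτ hzS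
          have hzfix : φ x1 z = z := hφ1fix z hzτ hzS
          have hc : Commute (φ z) τ := by
            rw [← hφB]
            exact (hL5 z hzfix).pow_right B
          exact hpres (φ z) hc
    -- supp τ is invariant under the whole inner group: contradiction with transitivity
    let Hst : Subgroup (Equiv.Perm (Fin d)) :=
      { carrier := {g | ∀ w, τ (g w) ≠ g w ↔ τ w ≠ w}
        one_mem' := by intro w; rfl
        mul_mem' := by
          intro g₁ g₂ h₁ h₂ w
          exact (h₁ (g₂ w)).trans (h₂ w)
        inv_mem' := by
          intro g hg w
          have h := hg (g⁻¹ w)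
          rw [show g (g⁻¹ w) = w from Equiv.apply_symm_apply g w] at h
          exact h.symm }
    have hle : G ≤ Hst := by
      rw [hGdef, Subgroup.closure_le]
      rintro _ ⟨z, rfl⟩
      exact hgen z
    obtain ⟨π, hπG, hπ1⟩ := hInd x1 t₁
    have hπ : ∀ w, τ (π w) ≠ π w ↔ τ w ≠ w := hle hπG
    have hcontra := (hπ x1).mp (by rw [hπ1]; exact ht₁)
    exact hcontra (by rw [hτx1])
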